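/- Let 𝔤 = V₁ ⊕ V₂ be a Métivier real Lie algebra of rank 2m (that is, a step-2 stratified Lie algebra whose Métivier order equals its rank 2m). Then 𝔤 is hypergenerated of order m − 1. -/

import Mathlib

/-- The submodule of a Lie algebra spanned by brackets of elements of two submodules. -/
def bracketSpan {L : Type*} [LieRing L] [LieAlgebra ℝ L] (A B : Submodule ℝ L) :
    Submodule ℝ L :=
  Submodule.span ℝ {z | ∃ x ∈ A, ∃ y ∈ B, ⁅x, y⁆ = z}

/-- The commutator submodule `[𝔤, 𝔤]` of a Lie algebra. -/
def commutatorSubmodule (L : Type*) [LieRing L] [LieAlgebra ℝ L] : Submodule ℝ L :=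
  bracketSpan (⊤ : Submodule ℝ L) ⊤

/-- A family `V` of submodules of a real Lie algebra `L` is a stratification of step `s` if
`L = V 1 ⊕ ⋯ ⊕ V s`, `[V 1, V (i-1)] = V i` for `2 ≤ i ≤ s`, `V s ≠ 0` and `[V 1, V s] = 0`.
We also require `V i = 0` for `i = 0` and `i > s`. -/
structure IsStratification (L : Type*) [LieRing L] [LieAlgebra ℝ L]
    (V : ℕ → Submodule ℝ L) (s : ℕ) : Prop where
  one_le_step : 1 ≤ s
  isInternal : DirectSum.IsInternal (fun i : Fin s => V (i.1 + 1))
  bracket_eq : ∀ i, 2 ≤ i → i ≤ s → bracketSpan (V 1) (V (i - 1)) = V i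
  last_ne_bot : V s ≠ ⊥
  bracket_last_eq_bot : bracketSpan (V 1) (V s) = ⊥
  zero_eq_bot : V 0 = ⊥
  eq_bot_of_gt : ∀ i, s < i → V i = ⊥

/-- A stratified real Lie algebra with strata `V` and rank `m = dim (V 1)` is hypergenerated of
order `k` if every subspace `P ⊆ V 1` with `dim P = m - k` satisfies `[𝔤,𝔤] ⊆ Lie(P)`. -/
def IsHypergenerated (L : Type*) [LieRing L] [LieAlgebra ℝ L]
    (V : ℕ → Submodule ℝ L) (k : ℕ) : Prop :=
  ∀ P : Submodule ℝ L, P ≤ V 1 →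
    Module.finrank ℝ P = Module.finrank ℝ (V 1) - k →
    commutatorSubmodule L ≤ (LieSubalgebra.lieSpan ℝ L (P : Set L)).toSubmodule

/-- The Lie bracket as a bilinear map `V₁ → V₁ → V₂`, given that brackets of elements
of `V₁` lie in `V₂`. -/
noncomputable def bracketBilin {L : Type*} [LieRing L] [LieAlgebra ℝ L]
    (V₁ V₂ : Submodule ℝ L) (h : ∀ v ∈ V₁, ∀ w ∈ V₁, ⁅v, w⁆ ∈ V₂) :
    V₁ →ₗ[ℝ] V₁ →ₗ[ℝ] V₂ :=
  LinearMap.mk₂ ℝ (fun v w => ⟨⁅(v : L), (w : L)⁆, h v v.2 w w.2⟩)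
    (fun x y z => Subtype.ext (by simp [add_lie]))
    (fun c x y => Subtype.ext (by simp))
    (fun x y z => Subtype.ext (by simp [lie_add]))
    (fun c x y => Subtype.ext (by simp))

/-- The Kaplan operator: to a functional `μ` on `V₂` it associates the alternating
bilinear form `(v, w) ↦ μ ⁅v, w⁆` on `V₁`. -/
noncomputable def kaplan {L : Type*} [LieRing L] [LieAlgebra ℝ L]
    (V₁ V₂ : Submodule ℝ L) (h : ∀ v ∈ V₁, ∀ w ∈ V₁, ⁅v, w⁆ ∈ V₂)
    (μ : Module.Dual ℝ V₂) : LinearMap.BilinForm ℝ V₁ :=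
  (bracketBilin V₁ V₂ h).compr₂ μ

/-- The rank of a bilinear form: `dim V - dim ker ω`. -/
noncomputable def formRank {V : Type*} [AddCommGroup V] [Module ℝ V]
    (ω : LinearMap.BilinForm ℝ V) : ℕ :=
  Module.finrank ℝ V - Module.finrank ℝ (LinearMap.ker ω)

/-- The Métivier order of a step-2 stratified Lie algebra: the minimum of the ranks of the
Kaplan forms `J_μ` over nonzero functionals `μ` on `V₂`. -/
noncomputable def metivierOrder {L : Type*} [LieRing L] [LieAlgebra ℝ L]
    (V₁ V₂ : Submodule ℝ L) (h : ∀ v ∈ V₁, ∀ w ∈ V₁, ⁅v, w⁆ ∈ V₂) : ℕ :=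
  sInf {r : ℕ | ∃ μ : Module.Dual ℝ V₂, μ ≠ 0 ∧ r = formRank (kaplan V₁ V₂ h μ)}

theorem IsStratification.lie_mem_sq {L : Type*} [LieRing L] [LieAlgebra ℝ L]
    {V : ℕ → Submodule ℝ L} {s : ℕ} (hst : IsStratification L V s) (hs : 2 ≤ s) :
    ∀ v ∈ V 1, ∀ w ∈ V 1, ⁅v, w⁆ ∈ V 2 := by
  intro v hv w hw
  have h2 : bracketSpan (V 1) (V 1) = V 2 := hst.bracket_eq 2 le_rfl hs
  rw [← h2]
  exact Submodule.subset_span ⟨v, hv, w, hw, rfl⟩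

/-- A Métivier real Lie algebra of rank `2m` (a step-2 stratified Lie
algebra whose Métivier order equals its rank `2m`) is hypergenerated of order `m - 1`. -/
theorem metivier_isHypergenerated {L : Type*} [LieRing L] [LieAlgebra ℝ L]
    [FiniteDimensional ℝ L] (V : ℕ → Submodule ℝ L) (m : ℕ)
    (hst : IsStratification L V 2) (hrank : Module.finrank ℝ (V 1) = 2 * m)
    (hmet : metivierOrder (V 1) (V 2) (hst.lie_mem_sq le_rfl) = Module.finrank ℝ (V 1)) :
    IsHypergenerated L V (m - 1) := by
  classical
  have h := hst.lie_mem_sq (le_refl 2)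
  have hV2 : bracketSpan (V 1) (V 1) = V 2 := hst.bracket_eq 2 le_rfl le_rfl
  -- central: brackets with V 2 vanish
  have hcent : ∀ a ∈ V 1, ∀ b ∈ V 2, ⁅a, b⁆ = (0 : L) := by
    intro a ha b hb
    have hz : ⁅a, b⁆ ∈ bracketSpan (V 1) (V 2) :=
      Submodule.subset_span ⟨a, ha, b, hb, rfl⟩
    rw [hst.bracket_last_eq_bot] at hz
    simpa using hz
  have hcent2 : ∀ a ∈ V 2, ∀ b ∈ V 2, ⁅a, b⁆ = (0 : L) := by
    intro a ha b hb
    let f : L →ₗ[ℝ] L :=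
      { toFun := fun x => ⁅x, b⁆
        map_add' := fun x y => add_lie x y b
        map_smul' := fun c x => smul_lie c x b }
    have hker : V 2 ≤ LinearMap.ker f := by
      rw [← hV2]
      refine Submodule.span_le.mpr ?_
      rintro z ⟨x, hx, y, hy, rfl⟩
      simp only [SetLike.mem_coe, LinearMap.mem_ker]
      show ⁅⁅x, y⁆, b⁆ = 0
      rw [lie_lie, hcent x hx b hb, hcent y hy b hb]
      simp
    exact hker ha
  -- m = 0 is impossible
  rcases Nat.eq_zero_or_pos m with hm | hm
  · exfalso
    apply hst.last_ne_bot
    have hV1 : V 1 = ⊥ := by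
      refine Submodule.finrank_eq_zero.mp ?_
      rw [hrank, hm, mul_zero]
    rw [← hV2, hV1]
    refine le_bot_iff.mp (Submodule.span_le.mpr ?_)
    rintro z ⟨x, hx, y, hy, rfl⟩
    simp only [Submodule.mem_bot] at hx
    subst hx
    simp
  intro P hP hdimP
  have hdim : Module.finrank ℝ P = m + 1 := by rw [hrank] at hdimP; omega
  -- the commutator is contained in V 2
  have htop : V 1 ⊔ V 2 = ⊤ := by
    have hi := hst.isInternal.submodule_iSup_eq_top
    rw [← hi]
    refine le_antisymm (sup_le ?_ ?_) (iSup_le ?_)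
    · exact le_iSup (fun i : Fin 2 => V (i.1 + 1)) ⟨0, by norm_num⟩
    · exact le_iSup (fun i : Fin 2 => V (i.1 + 1)) ⟨1, by norm_num⟩
    · intro i
      fin_cases i
      · exact le_sup_left
      · exact le_sup_right
  have hcomm : commutatorSubmodule L ≤ V 2 := by
    refine Submodule.span_le.mpr ?_
    rintro z ⟨x, -, y, -, rfl⟩
    have hx : x ∈ V 1 ⊔ V 2 := htop ▸ Submodule.mem_top
    have hy : y ∈ V 1 ⊔ V 2 := htop ▸ Submodule.mem_top
    obtain ⟨x1, hx1, x2, hx2, rfl⟩ := Submodule.mem_sup.mp hx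
    obtain ⟨y1, hy1, y2, hy2, rfl⟩ := Submodule.mem_sup.mp hy
    have h21 : ⁅x2, y1⁆ = (0 : L) := by
      rw [← lie_skew, hcent y1 hy1 x2 hx2, neg_zero]
    show ⁅x1 + x2, y1 + y2⁆ ∈ V 2
    rw [add_lie, lie_add, lie_add, hcent x1 hx1 y2 hy2, hcent2 x2 hx2 y2 hy2, h21]
    simpa using h x1 hx1 y1 hy1
  -- set up the bracket span of P inside V 2
  set P' : Submodule ℝ (V 1) := P.comap (V 1).subtype with hP'def
  have hP'rank : Module.finrank ℝ P' = m + 1 := by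
    rw [← hdim]
    exact LinearEquiv.finrank_eq (Submodule.comapSubtypeEquivOfLe hP)
  set B := bracketBilin (V 1) (V 2) h with hBdef
  set S : Submodule ℝ (V 2) :=
    Submodule.span ℝ {z | ∃ v ∈ P', ∃ w ∈ P', B v w = z} with hSdef
  have hS : S = ⊤ := by
    by_contra hS
    obtain ⟨μ, hμ, hμ0⟩ :=
      Submodule.exists_dual_map_eq_bot_of_lt_top (lt_top_iff_ne_top.mpr hS) inferInstance
    set ω := kaplan (V 1) (V 2) h μ with hωdef
    have hωapp : ∀ v w : V 1, ω v w = μ (B v w) := fun v w => rfl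
    have halt : ω.IsAlt := by
      intro v
      rw [hωapp]
      have hBvv : B v v = 0 := Subtype.ext (by
        show ⁅(v : L), (v : L)⁆ = 0
        exact lie_self _)
      rw [hBvv, map_zero]
    have hrefl : ω.IsRefl := halt.isRefl
    -- ω is nondegenerate
    have hle : metivierOrder (V 1) (V 2) h ≤ formRank ω :=
      Nat.sInf_le ⟨μ, hμ, rfl⟩
    have hkerle : Module.finrank ℝ (LinearMap.ker ω) ≤ Module.finrank ℝ (V 1) :=
      Submodule.finrank_le _
    have hker0 : Module.finrank ℝ (LinearMap.ker ω) = 0 := by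
      rw [hmet, hrank] at hle
      unfold formRank at hle
      rw [hrank] at hle hkerle
      omega
    have hnd : ω.Nondegenerate := by
      refine LinearMap.BilinForm.nondegenerate_iff_ker_eq_bot.mpr ?_
      exact Submodule.finrank_eq_zero.mp hker0
    -- P' is isotropic for ω
    have hiso : P' ≤ ω.orthogonal P' := by
      intro v hv
      rw [LinearMap.BilinForm.mem_orthogonal_iff]
      intro n hn
      show ω n v = 0
      rw [hωapp]
      have hmem : B n v ∈ S := Submodule.subset_span ⟨n, hn, v, hv, rfl⟩
      have : μ (B n v) ∈ S.map μ := Submodule.mem_map_of_mem hmem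
      rw [hμ0] at this
      simpa using this
    have horth := LinearMap.BilinForm.finrank_orthogonal hnd P'
    have hPle := Submodule.finrank_mono hiso
    rw [horth, hP'rank, hrank] at hPle
    omega
  -- conclude
  have hSmap : S.map (V 2).subtype ≤
      (LieSubalgebra.lieSpan ℝ L (P : Set L)).toSubmodule := by
    rw [Submodule.map_span]
    refine Submodule.span_le.mpr ?_
    rintro z ⟨w, ⟨v, hv, u, hu, rfl⟩, rfl⟩
    show ((B v u : V 2) : L) ∈ (LieSubalgebra.lieSpan ℝ L (P : Set L)).toSubmodule
    have hz : ((B v u : V 2) : L) = ⁅((v : V 1) : L), ((u : V 1) : L)⁆ := rfl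
    rw [hz]
    exact LieSubalgebra.lie_mem _ (LieSubalgebra.subset_lieSpan hv)
      (LieSubalgebra.subset_lieSpan hu)
  refine le_trans hcomm ?_
  intro x hx
  have hmem : (⟨x, hx⟩ : V 2) ∈ S := hS ▸ Submodule.mem_top
  have := Submodule.mem_map_of_mem (f := (V 2).subtype) hmem
  exact hSmap this
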